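/- The image of every multilinear commutative non-associative polynomial p over F evaluated on 𝔐 is one of: {0}, the line spanned by P + ωR + ω²S, the line spanned by P + ω²R + ωS (where ω ∈ F satisfies ω² + ω + 1 = 0, these cases occurring only if such ω exists), the 2-dimensional space 𝔐₀, or all of 𝔐. In particular, the image is always a vector subspace of 𝔐. -/

import Mathlib

/-- The rock-paper-scissors monad algebra: coordinates w.r.t. the basis `{1, P, R, S}`. -/
def RPS (F : Type*) := F × F × F × F

namespace RPS

variable {F : Type*} [Field F]

instance : AddCommGroup (RPS F) := inferInstanceAs (AddCommGroup (F × F × F × F))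
instance : Module F (RPS F) := inferInstanceAs (Module F (F × F × F × F))

/-- Build the element `x0·1 + a·P + b·R + c·S`. -/
def mk4 (x0 a b c : F) : RPS F := (x0, a, b, c)

/-- Scalar part: coefficient of `1`. -/
def sc (x : RPS F) : F := x.1
/-- Coefficient of `P`. -/
def cP (x : RPS F) : F := x.2.1
/-- Coefficient of `R`. -/
def cR (x : RPS F) : F := x.2.2.1
/-- Coefficient of `S`. -/
def cS (x : RPS F) : F := x.2.2.2

instance : One (RPS F) := ⟨mk4 1 0 0 0⟩

/-- The commutative non-associative multiplication determined by: `1` is the unit,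
`P, R, S` are idempotent, and `P·R = R·P = P`, `P·S = S·P = S`, `S·R = R·S = R`. -/
instance : Mul (RPS F) :=
  ⟨fun x y => mk4 (sc x * sc y)
    (sc x * cP y + sc y * cP x + cP x * cP y + cP x * cR y + cR x * cP y)
    (sc x * cR y + sc y * cR x + cR x * cR y + cR x * cS y + cS x * cR y)
    (sc x * cS y + sc y * cS x + cS x * cS y + cP x * cS y + cS x * cP y)⟩

/-- The basis element `P`. -/
def eP : RPS F := mk4 0 1 0 0
/-- The basis element `R`. -/
def eR : RPS F := mk4 0 0 1 0
/-- The basis element `S`. -/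
def eS : RPS F := mk4 0 0 0 1

/-- The trace homomorphism `tr(x0·1 + aP + bR + cS) = x0 + a + b + c`. -/
def tr (x : RPS F) : F := sc x + cP x + cR x + cS x

/-- The linear map `φ` with `1 ↦ 1`, `P ↦ R`, `R ↦ S`, `S ↦ P`. -/
def phi (x : RPS F) : RPS F := mk4 (sc x) (cS x) (cP x) (cR x)

end RPS

/-- The multiset of occurrences of variables in a non-associative monomial. -/
def occurs {α : Type*} : FreeMagma α → Multiset α
  | .of a => {a}
  | .mul x y => occurs x + occurs y

/-- A (non-associative) multilinear polynomial in `m` variables over `F`, encoded as a finitely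
supported linear combination of non-associative monomials (elements of the free magma), is
multilinear if every monomial contains each of the `m` variables exactly once. -/
def IsMultilinear {F : Type*} [Field F] {m : ℕ} (p : FreeMagma (Fin m) →₀ F) : Prop :=
  ∀ w ∈ p.support, occurs w = (Finset.univ : Finset (Fin m)).val

/-- Evaluation of a non-associative polynomial on an `F`-algebra `A`. -/
def evalPoly {F : Type*} [Field F] {A : Type*} [AddCommGroup A] [Module F A] [Mul A]
    {m : ℕ} (p : FreeMagma (Fin m) →₀ F) (v : Fin m → A) : A :=
  p.sum fun w c => c • (FreeMagma.lift v : FreeMagma (Fin m) →ₙ* A) w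

set_option linter.unusedSectionVars false

namespace RPS

variable {F : Type*} [Field F]

-- component simp lemmas
@[simp] lemma sc_mk4 (a b c d : F) : sc (mk4 a b c d) = a := rfl
@[simp] lemma cP_mk4 (a b c d : F) : cP (mk4 a b c d) = b := rfl
@[simp] lemma cR_mk4 (a b c d : F) : cR (mk4 a b c d) = c := rfl
@[simp] lemma cS_mk4 (a b c d : F) : cS (mk4 a b c d) = d := rfl

@[simp] lemma sc_add (x y : RPS F) : sc (x + y) = sc x + sc y := rfl
@[simp] lemma cP_add (x y : RPS F) : cP (x + y) = cP x + cP y := rfl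
@[simp] lemma cR_add (x y : RPS F) : cR (x + y) = cR x + cR y := rfl
@[simp] lemma cS_add (x y : RPS F) : cS (x + y) = cS x + cS y := rfl

@[simp] lemma sc_smul (c : F) (x : RPS F) : sc (c • x) = c * sc x := rfl
@[simp] lemma cP_smul (c : F) (x : RPS F) : cP (c • x) = c * cP x := rfl
@[simp] lemma cR_smul (c : F) (x : RPS F) : cR (c • x) = c * cR x := rfl
@[simp] lemma cS_smul (c : F) (x : RPS F) : cS (c • x) = c * cS x := rfl

@[simp] lemma sc_zero : sc (0 : RPS F) = 0 := rfl
@[simp] lemma cP_zero : cP (0 : RPS F) = 0 := rfl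
@[simp] lemma cR_zero : cR (0 : RPS F) = 0 := rfl
@[simp] lemma cS_zero : cS (0 : RPS F) = 0 := rfl

@[simp] lemma sc_one : sc (1 : RPS F) = 1 := rfl
@[simp] lemma cP_one : cP (1 : RPS F) = 0 := rfl
@[simp] lemma cR_one : cR (1 : RPS F) = 0 := rfl
@[simp] lemma cS_one : cS (1 : RPS F) = 0 := rfl

@[simp] lemma sc_mul (x y : RPS F) : sc (x * y) = sc x * sc y := rfl
lemma cP_mul (x y : RPS F) : cP (x * y) =
    sc x * cP y + sc y * cP x + cP x * cP y + cP x * cR y + cR x * cP y := rfl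
lemma cR_mul (x y : RPS F) : cR (x * y) =
    sc x * cR y + sc y * cR x + cR x * cR y + cR x * cS y + cS x * cR y := rfl
lemma cS_mul (x y : RPS F) : cS (x * y) =
    sc x * cS y + sc y * cS x + cS x * cS y + cP x * cS y + cS x * cP y := rfl

lemma ext4 {x y : RPS F} (h0 : sc x = sc y) (h1 : cP x = cP y) (h2 : cR x = cR y)
    (h3 : cS x = cS y) : x = y :=
  Prod.ext h0 (Prod.ext h1 (Prod.ext h2 h3))

lemma one_mul' (x : RPS F) : 1 * x = x := by
  apply ext4 <;> simp [cP_mul, cR_mul, cS_mul]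

lemma mul_one' (x : RPS F) : x * 1 = x := by
  apply ext4 <;> simp [cP_mul, cR_mul, cS_mul]

lemma add_mul' (x y z : RPS F) : (x + y) * z = x * z + y * z := by
  apply ext4 <;> simp [cP_mul, cR_mul, cS_mul] <;> ring

lemma mul_add' (x y z : RPS F) : x * (y + z) = x * y + x * z := by
  apply ext4 <;> simp [cP_mul, cR_mul, cS_mul] <;> ring

lemma smul_mul' (c : F) (x y : RPS F) : (c • x) * y = c • (x * y) := by
  apply ext4 <;> simp [cP_mul, cR_mul, cS_mul] <;> ring

lemma mul_smul' (c : F) (x y : RPS F) : x * (c • y) = c • (x * y) := by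
  apply ext4 <;> simp [cP_mul, cR_mul, cS_mul] <;> ring

@[simp] lemma sc_phi (x : RPS F) : sc (phi x) = sc x := rfl
@[simp] lemma cP_phi (x : RPS F) : cP (phi x) = cS x := rfl
@[simp] lemma cR_phi (x : RPS F) : cR (phi x) = cP x := rfl
@[simp] lemma cS_phi (x : RPS F) : cS (phi x) = cR x := rfl

lemma phi_add (x y : RPS F) : phi (x + y) = phi x + phi y := rfl
lemma phi_smul (c : F) (x : RPS F) : phi (c • x) = c • phi x := rfl

lemma phi_mul (x y : RPS F) : phi (x * y) = phi x * phi y := by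
  apply ext4 <;> simp [cP_mul, cR_mul, cS_mul] <;> ring

lemma tr_mul (x y : RPS F) : tr (x * y) = tr x * tr y := by
  simp [tr, cP_mul, cR_mul, cS_mul]; ring

def scHom : RPS F →+ F := { toFun := sc, map_zero' := rfl, map_add' := fun _ _ => rfl }
def cPHom : RPS F →+ F := { toFun := cP, map_zero' := rfl, map_add' := fun _ _ => rfl }
def cRHom : RPS F →+ F := { toFun := cR, map_zero' := rfl, map_add' := fun _ _ => rfl }
def trHom : RPS F →+ F :=
  { toFun := tr, map_zero' := by simp [tr], map_add' := fun x y => by simp [tr]; ring }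
def phiHom : RPS F →+ RPS F := { toFun := phi, map_zero' := rfl, map_add' := fun _ _ => rfl }

lemma char_identity {x : RPS F} (htr : tr x = 0) (hsc : sc x = 0) :
    phi (phi x) + phi x + x = 0 := by
  have h : cP x + cR x + cS x = 0 := by
    simp only [tr] at htr; linear_combination htr - hsc
  apply ext4
  · simp; linear_combination (3:F) * hsc
  · simp; linear_combination h
  · simp; linear_combination h
  · simp; linear_combination h

end RPS


-- ## Lift lemmas
namespace RPSAux
open RPS Function

variable {F : Type*} [Field F] {m : ℕ}

lemma occurs_of {α : Type*} (a : α) : occurs (FreeMagma.of a) = {a} := rfl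
lemma occurs_mul {α : Type*} (x y : FreeMagma α) :
    occurs (x * y) = occurs x + occurs y := rfl

lemma lift_eq_one {v : Fin m → RPS F} :
    ∀ w : FreeMagma (Fin m), (∀ i ∈ occurs w, v i = 1) →
      (FreeMagma.lift v : FreeMagma (Fin m) →ₙ* RPS F) w = 1
  | .of a, h => h a (by simp [occurs_of])
  | .mul w₁ w₂, h => by
    have h' : ∀ i ∈ occurs (w₁ * w₂), v i = 1 := h
    simp only [occurs_mul, Multiset.mem_add] at h'
    have h₁ := lift_eq_one (v := v) w₁ (fun i hi => h' i (Or.inl hi))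
    have h₂ := lift_eq_one (v := v) w₂ (fun i hi => h' i (Or.inr hi))
    show (FreeMagma.lift v) (w₁ * w₂) = 1
    rw [map_mul, h₁, h₂, one_mul']

lemma lift_update_notin {v : Fin m → RPS F} {i : Fin m} {x : RPS F} :
    ∀ w : FreeMagma (Fin m), i ∉ occurs w →
      (FreeMagma.lift (update v i x) : FreeMagma (Fin m) →ₙ* RPS F) w =
      (FreeMagma.lift v : FreeMagma (Fin m) →ₙ* RPS F) w
  | .of a, h => by
    have hne : a ≠ i := by simp [occurs_of] at h; exact fun e => h (e ▸ rfl)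
    show update v i x a = v a
    exact update_of_ne hne x v
  | .mul w₁ w₂, h => by
    have h' : i ∉ occurs (w₁ * w₂) := h
    simp only [occurs_mul, Multiset.mem_add] at h'
    replace h := h'
    push_neg at h
    have h₁ := lift_update_notin (v := v) (i := i) (x := x) w₁ h.1
    have h₂ := lift_update_notin (v := v) (i := i) (x := x) w₂ h.2
    show (FreeMagma.lift (update v i x)) (w₁ * w₂) = (FreeMagma.lift v) (w₁ * w₂)
    rw [map_mul, map_mul, h₁, h₂]

lemma count_of_eq {α : Type*} [DecidableEq α] {i a : α} (h : Multiset.count i (occurs (FreeMagma.of a)) = 1) :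
    a = i := by
  simp [occurs_of, Multiset.count_singleton] at h
  exact h.symm

lemma lift_update_add {v : Fin m → RPS F} {i : Fin m} {x y : RPS F} :
    ∀ w : FreeMagma (Fin m), Multiset.count i (occurs w) = 1 →
      (FreeMagma.lift (update v i (x + y)) : FreeMagma (Fin m) →ₙ* RPS F) w =
      (FreeMagma.lift (update v i x) : FreeMagma (Fin m) →ₙ* RPS F) w +
      (FreeMagma.lift (update v i y) : FreeMagma (Fin m) →ₙ* RPS F) w
  | .of a, h => by
    obtain rfl := count_of_eq h
    show update v a (x + y) a = update v a x a + update v a y a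
    simp
  | .mul w₁ w₂, h => by
    have h' : Multiset.count i (occurs (w₁ * w₂)) = 1 := h
    rw [occurs_mul, Multiset.count_add] at h'
    show (FreeMagma.lift (update v i (x+y))) (w₁ * w₂) = _
    rcases Nat.eq_zero_or_pos (Multiset.count i (occurs w₁)) with h1 | h1
    · have h2 : Multiset.count i (occurs w₂) = 1 := by omega
      have hni : i ∉ occurs w₁ := by rwa [← Multiset.count_eq_zero]
      rw [map_mul]
      rw [lift_update_notin w₁ hni, lift_update_add w₂ h2]
      show _ = (FreeMagma.lift (update v i x)) (w₁ * w₂) + (FreeMagma.lift (update v i y)) (w₁ * w₂)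
      rw [map_mul, map_mul, lift_update_notin w₁ hni, lift_update_notin w₁ hni, mul_add']
    · have h1' : Multiset.count i (occurs w₁) = 1 := by omega
      have h2 : Multiset.count i (occurs w₂) = 0 := by omega
      have hni : i ∉ occurs w₂ := by rwa [← Multiset.count_eq_zero]
      rw [map_mul, lift_update_notin w₂ hni, lift_update_add w₁ h1']
      show _ = (FreeMagma.lift (update v i x)) (w₁ * w₂) + (FreeMagma.lift (update v i y)) (w₁ * w₂)
      rw [map_mul, map_mul, lift_update_notin w₂ hni, lift_update_notin w₂ hni, add_mul']

lemma lift_update_smul {v : Fin m → RPS F} {i : Fin m} {c : F} {x : RPS F} :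
    ∀ w : FreeMagma (Fin m), Multiset.count i (occurs w) = 1 →
      (FreeMagma.lift (update v i (c • x)) : FreeMagma (Fin m) →ₙ* RPS F) w =
      c • (FreeMagma.lift (update v i x) : FreeMagma (Fin m) →ₙ* RPS F) w
  | .of a, h => by
    obtain rfl := count_of_eq h
    show update v a (c • x) a = c • update v a x a
    simp
  | .mul w₁ w₂, h => by
    have h' : Multiset.count i (occurs (w₁ * w₂)) = 1 := h
    rw [occurs_mul, Multiset.count_add] at h'
    show (FreeMagma.lift (update v i (c • x))) (w₁ * w₂) =
      c • (FreeMagma.lift (update v i x)) (w₁ * w₂)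
    rw [map_mul, map_mul]
    rcases Nat.eq_zero_or_pos (Multiset.count i (occurs w₁)) with h1 | h1
    · have h2 : Multiset.count i (occurs w₂) = 1 := by omega
      have hni : i ∉ occurs w₁ := by rwa [← Multiset.count_eq_zero]
      rw [lift_update_notin w₁ hni, lift_update_notin w₁ hni, lift_update_smul w₂ h2, mul_smul']
    · have h1' : Multiset.count i (occurs w₁) = 1 := by omega
      have h2 : Multiset.count i (occurs w₂) = 0 := by omega
      have hni : i ∉ occurs w₂ := by rwa [← Multiset.count_eq_zero]
      rw [lift_update_notin w₂ hni, lift_update_notin w₂ hni, lift_update_smul w₁ h1', RPS.smul_mul']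

lemma lift_ones_update {i : Fin m} {x : RPS F} :
    ∀ w : FreeMagma (Fin m), Multiset.count i (occurs w) = 1 →
      (FreeMagma.lift (update (fun _ => (1 : RPS F)) i x) : FreeMagma (Fin m) →ₙ* RPS F) w = x
  | .of a, h => by
    obtain rfl := count_of_eq h
    show update (fun _ => (1 : RPS F)) a x a = x
    simp
  | .mul w₁ w₂, h => by
    have h' : Multiset.count i (occurs (w₁ * w₂)) = 1 := h
    rw [occurs_mul, Multiset.count_add] at h'
    show (FreeMagma.lift (update (fun _ => (1:RPS F)) i x)) (w₁ * w₂) = x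
    rw [map_mul]
    rcases Nat.eq_zero_or_pos (Multiset.count i (occurs w₁)) with h1 | h1
    · have h2 : Multiset.count i (occurs w₂) = 1 := by omega
      have hni : i ∉ occurs w₁ := by rwa [← Multiset.count_eq_zero]
      have hv1 : ∀ j ∈ occurs w₁, update (fun _ => (1 : RPS F)) i x j = 1 := by
        intro j hj
        have hne : j ≠ i := fun e => hni (e ▸ hj)
        rw [Function.update_of_ne hne]
      rw [lift_eq_one w₁ hv1, lift_ones_update w₂ h2, one_mul']
    · have h1' : Multiset.count i (occurs w₁) = 1 := by omega
      have h2 : Multiset.count i (occurs w₂) = 0 := by omega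
      have hni : i ∉ occurs w₂ := by rwa [← Multiset.count_eq_zero]
      have hv1 : ∀ j ∈ occurs w₂, update (fun _ => (1 : RPS F)) i x j = 1 := by
        intro j hj
        have hne : j ≠ i := fun e => hni (e ▸ hj)
        rw [Function.update_of_ne hne]
      rw [lift_eq_one w₂ hv1, lift_ones_update w₁ h1', mul_one']

lemma sc_lift {v : Fin m → RPS F} :
    ∀ w : FreeMagma (Fin m),
      sc ((FreeMagma.lift v : FreeMagma (Fin m) →ₙ* RPS F) w) =
      ((occurs w).map fun i => sc (v i)).prod
  | .of a => by simp [occurs_of]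
  | .mul w₁ w₂ => by
    have e : occurs (w₁.mul w₂) = occurs w₁ + occurs w₂ := rfl
    show sc ((FreeMagma.lift v) (w₁ * w₂)) = _
    rw [map_mul, sc_mul, sc_lift w₁, sc_lift w₂, e, Multiset.map_add, Multiset.prod_add]

lemma tr_lift {v : Fin m → RPS F} :
    ∀ w : FreeMagma (Fin m),
      tr ((FreeMagma.lift v : FreeMagma (Fin m) →ₙ* RPS F) w) =
      ((occurs w).map fun i => tr (v i)).prod
  | .of a => by simp [occurs_of]
  | .mul w₁ w₂ => by
    have e : occurs (w₁.mul w₂) = occurs w₁ + occurs w₂ := rfl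
    show tr ((FreeMagma.lift v) (w₁ * w₂)) = _
    rw [map_mul, tr_mul, tr_lift w₁, tr_lift w₂, e, Multiset.map_add, Multiset.prod_add]

lemma phi_lift {v : Fin m → RPS F} :
    ∀ w : FreeMagma (Fin m),
      (FreeMagma.lift (fun j => phi (v j)) : FreeMagma (Fin m) →ₙ* RPS F) w =
      phi ((FreeMagma.lift v : FreeMagma (Fin m) →ₙ* RPS F) w)
  | .of a => rfl
  | .mul w₁ w₂ => by
    show (FreeMagma.lift fun j => phi (v j)) (w₁ * w₂) = phi ((FreeMagma.lift v) (w₁ * w₂))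
    rw [map_mul, map_mul, phi_lift w₁, phi_lift w₂, phi_mul]

variable {p : FreeMagma (Fin m) →₀ F}

lemma eval_def (v : Fin m → RPS F) :
    evalPoly p v = ∑ w ∈ p.support, p w • (FreeMagma.lift v : FreeMagma (Fin m) →ₙ* RPS F) w := rfl

lemma count_one (hml : IsMultilinear p) {w : FreeMagma (Fin m)} (hw : w ∈ p.support) (i : Fin m) :
    Multiset.count i (occurs w) = 1 := by
  rw [hml w hw]; exact Multiset.count_univ i

lemma eval_update_add (hml : IsMultilinear p) (v : Fin m → RPS F) (i : Fin m) (x y : RPS F) :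
    evalPoly p (update v i (x + y)) =
      evalPoly p (update v i x) + evalPoly p (update v i y) := by
  rw [eval_def, eval_def, eval_def, ← Finset.sum_add_distrib]
  refine Finset.sum_congr rfl fun w hw => ?_
  rw [lift_update_add w (count_one hml hw i), smul_add]

lemma eval_update_smul (hml : IsMultilinear p) (v : Fin m → RPS F) (i : Fin m) (c : F) (x : RPS F) :
    evalPoly p (update v i (c • x)) = c • evalPoly p (update v i x) := by
  rw [eval_def, eval_def, Finset.smul_sum]
  refine Finset.sum_congr rfl fun w hw => ?_
  rw [lift_update_smul w (count_one hml hw i), smul_comm]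

lemma eval_ones (hml : IsMultilinear p) (i : Fin m) (x : RPS F) :
    evalPoly p (update (fun _ => (1 : RPS F)) i x) = (∑ w ∈ p.support, p w) • x := by
  rw [eval_def, Finset.sum_smul]
  refine Finset.sum_congr rfl fun w hw => ?_
  rw [lift_ones_update w (count_one hml hw i)]

lemma sc_eval (hml : IsMultilinear p) (v : Fin m → RPS F) :
    sc (evalPoly p v) = (∑ w ∈ p.support, p w) * ∏ i, sc (v i) := by
  rw [eval_def]
  rw [show sc (∑ w ∈ p.support, p w • (FreeMagma.lift v : FreeMagma (Fin m) →ₙ* RPS F) w)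
      = ∑ w ∈ p.support, sc (p w • (FreeMagma.lift v : FreeMagma (Fin m) →ₙ* RPS F) w)
    from map_sum scHom _ _, Finset.sum_mul]
  refine Finset.sum_congr rfl fun w hw => ?_
  rw [sc_smul, sc_lift w, hml w hw]
  rfl

lemma tr_eval (hml : IsMultilinear p) (v : Fin m → RPS F) :
    tr (evalPoly p v) = (∑ w ∈ p.support, p w) * ∏ i, tr (v i) := by
  rw [eval_def]
  rw [show tr (∑ w ∈ p.support, p w • (FreeMagma.lift v : FreeMagma (Fin m) →ₙ* RPS F) w)
      = ∑ w ∈ p.support, tr (p w • (FreeMagma.lift v : FreeMagma (Fin m) →ₙ* RPS F) w)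
    from map_sum trHom _ _, Finset.sum_mul]
  refine Finset.sum_congr rfl fun w hw => ?_
  have htr_smul : ∀ (c : F) (x : RPS F), tr (c • x) = c * tr x := by
    intro c x; simp [tr]; ring
  rw [htr_smul, tr_lift w, hml w hw]
  rfl

lemma eval_phi (v : Fin m → RPS F) :
    evalPoly p (fun j => phi (v j)) = phi (evalPoly p v) := by
  rw [eval_def, eval_def]
  rw [show phi (∑ w ∈ p.support, p w • (FreeMagma.lift v : FreeMagma (Fin m) →ₙ* RPS F) w)
      = ∑ w ∈ p.support, phi (p w • (FreeMagma.lift v : FreeMagma (Fin m) →ₙ* RPS F) w)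
    from map_sum phiHom _ _]
  refine Finset.sum_congr rfl fun w hw => ?_
  rw [phi_lift w, phi_smul]


lemma freeMagma_fin0_false : ∀ _ : FreeMagma (Fin 0), False
  | .of a => Fin.elim0 a
  | .mul x _ => freeMagma_fin0_false x

/-- Two multiadditive forms whose every one-variable slice pair is linearly dependent
are globally proportional (or the first vanishes). -/
lemma prop_lemma {F : Type*} [Field F] {V : Type*} [AddCommGroup V] :
    ∀ (m : ℕ) (f g : (Fin m → V) → F),
    (∀ (v : Fin m → V) (i : Fin m) (x y : V),
      f (update v i (x + y)) = f (update v i x) + f (update v i y)) →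
    (∀ (v : Fin m → V) (i : Fin m) (x y : V),
      g (update v i (x + y)) = g (update v i x) + g (update v i y)) →
    (∀ (v : Fin m → V) (i : Fin m) (x y : V),
      f (update v i x) * g (update v i y) = f (update v i y) * g (update v i x)) →
    (∀ v, f v = 0) ∨ ∃ c, ∀ v, g v = c * f v := by
  intro m
  induction m with
  | zero =>
    intro f g _ _ _
    by_cases h : f (fun i => i.elim0) = 0
    · left
      intro v
      rwa [Subsingleton.elim v (fun i => i.elim0)]
    · right
      refine ⟨g (fun i => i.elim0) / f (fun i => i.elim0), fun v => ?_⟩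
      rw [Subsingleton.elim v (fun i => i.elim0)]
      field_simp
  | succ m IH =>
    intro f g hf hg hfg
    -- facts about updating snoc tuples
    have hupd : ∀ (y : Fin m → V) (z w : V),
        Function.update (Fin.snoc y z) (Fin.last m) w = (Fin.snoc y w : Fin (m+1) → V) := by
      intro y z w
      rw [Fin.update_snoc_last]
    have hflast : ∀ (y : Fin m → V) (z z' : V),
        f (Fin.snoc y (z + z')) = f (Fin.snoc y z) + f (Fin.snoc y z') := by
      intro y z z'
      rw [← hupd y z (z + z'), hf, hupd, hupd]
    have hglast : ∀ (y : Fin m → V) (z z' : V),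
        g (Fin.snoc y (z + z')) = g (Fin.snoc y z) + g (Fin.snoc y z') := by
      intro y z z'
      rw [← hupd y z (z + z'), hg, hupd, hupd]
    have hfglast : ∀ (y : Fin m → V) (z z' : V),
        f (Fin.snoc y z) * g (Fin.snoc y z') = f (Fin.snoc y z') * g (Fin.snoc y z) := by
      intro y z z'
      have := hfg (Fin.snoc y z) (Fin.last m) z z'
      rwa [hupd, hupd] at this
    have hIH : ∀ z : V, (∀ y, f (Fin.snoc y z) = 0) ∨
        ∃ c, ∀ y, g (Fin.snoc y z) = c * f (Fin.snoc y z) := by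
      intro z
      refine IH (fun y => f (Fin.snoc y z)) (fun y => g (Fin.snoc y z)) ?_ ?_ ?_
      · intro y i x x'
        show f (Fin.snoc (update y i (x + x')) z) = f (Fin.snoc (update y i x) z) + f (Fin.snoc (update y i x') z)
        rw [Fin.snoc_update, Fin.snoc_update, Fin.snoc_update]
        exact hf _ _ _ _
      · intro y i x x'
        show g (Fin.snoc (update y i (x + x')) z) = g (Fin.snoc (update y i x) z) + g (Fin.snoc (update y i x') z)
        rw [Fin.snoc_update, Fin.snoc_update, Fin.snoc_update]
        exact hg _ _ _ _
      · intro y i x x'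
        show f (Fin.snoc (update y i x) z) * g (Fin.snoc (update y i x') z) = f (Fin.snoc (update y i x') z) * g (Fin.snoc (update y i x) z)
        rw [Fin.snoc_update, Fin.snoc_update]
        exact hfg _ _ _ _
    by_cases hf0 : ∀ v, f v = 0
    · exact Or.inl hf0
    right
    push_neg at hf0
    obtain ⟨v₀, hv₀⟩ := hf0
    set u' : Fin m → V := Fin.init v₀ with hu'
    set z₀ : V := v₀ (Fin.last m) with hz₀
    have hfu : f (Fin.snoc u' z₀) ≠ 0 := by rwa [hu', hz₀, Fin.snoc_init_self]
    obtain hcase | ⟨c, hc⟩ := hIH z₀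
    · exact absurd (hcase u') hfu
    refine ⟨c, fun v => ?_⟩
    rw [← Fin.snoc_init_self v]
    set y : Fin m → V := Fin.init v with hy
    set z : V := v (Fin.last m) with hz
    clear_value y z
    by_cases hFz : ∀ y', f (Fin.snoc y' z) = 0
    · -- case B : the slice at z vanishes identically for f
      rw [hFz y, mul_zero]
      by_cases hyz0 : f (Fin.snoc y z₀) = 0
      · -- B2
        obtain hL | ⟨r, hr⟩ := hIH (z₀ + z)
        · exfalso
          have h1 := hL u'
          rw [hflast, hFz u', add_zero] at h1
          exact hfu h1
        have h1 := hr y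
        rw [hflast, hglast, hyz0, hFz y, add_zero, mul_zero] at h1
        have h2 := hc y
        rw [hyz0, mul_zero] at h2
        linear_combination h1 - h2
      · -- B1
        have h1 := hfglast y z z₀
        rw [hFz y, zero_mul] at h1
        exact ((mul_eq_zero.mp h1.symm).resolve_left hyz0)
    · -- case A
      push_neg at hFz
      obtain ⟨y₁, hy₁⟩ := hFz
      obtain hL | ⟨r, hr⟩ := hIH z
      · exact absurd (hL y₁) hy₁
      rw [hr y]
      suffices hrc : r = c by rw [hrc]
      by_cases h1 : f (Fin.snoc y₁ z₀) = 0
      · by_cases h2 : f (Fin.snoc u' z) = 0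
        · -- use the slice at z₀ + z
          obtain hL | ⟨r', hr'⟩ := hIH (z₀ + z)
          · exfalso
            have := hL y₁
            rw [hflast, h1, zero_add] at this
            exact hy₁ this
          -- evaluate at y₁
          have e1 := hr' y₁
          rw [hflast, hglast, h1, zero_add] at e1
          have e2 : g (Fin.snoc y₁ z₀) = 0 := by
            have h3 := hfglast y₁ z₀ z
            rw [h1, zero_mul] at h3
            exact ((mul_eq_zero.mp h3.symm).resolve_left hy₁)
          rw [e2, zero_add, hr y₁] at e1
          have hrr' : r = r' := mul_right_cancel₀ hy₁ e1
          -- evaluate at u'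
          have e3 := hr' u'
          rw [hflast, hglast, h2, add_zero] at e3
          have e4 : g (Fin.snoc u' z) = 0 := by
            have h3 := hfglast u' z z₀
            rw [h2, zero_mul] at h3
            exact ((mul_eq_zero.mp h3.symm).resolve_left hfu)
          rw [e4, add_zero, hc u'] at e3
          have hcr' : c = r' := mul_right_cancel₀ hfu e3
          rw [hrr', hcr']
        · -- minors at u'
          have hm := hfglast u' z₀ z
          rw [hr u', hc u'] at hm
          have h3 : (c - r) * (f (Fin.snoc u' z) * f (Fin.snoc u' z₀)) = 0 := by
            linear_combination -hm
          have h4 := (mul_eq_zero.mp h3).resolve_right (mul_ne_zero h2 hfu)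
          linear_combination -h4
      · -- minors at y₁
        have hm := hfglast y₁ z z₀
        rw [hr y₁, hc y₁] at hm
        have h3 : (c - r) * (f (Fin.snoc y₁ z) * f (Fin.snoc y₁ z₀)) = 0 := by
          linear_combination hm
        have h4 := (mul_eq_zero.mp h3).resolve_right (mul_ne_zero hy₁ h1)
        linear_combination -h4

end RPSAux


open RPSAux in
open RPS in
/-- Main theorem: the image of any multilinear non-associative polynomial on `𝔐` is
`{0}`, the line `⟨P + ωR + ω²S⟩`, the line `⟨P + ω²R + ωS⟩` (with `ω² + ω + 1 = 0`,
possible only if such `ω` exists in `F`), the plane `𝔐₀`, or all of `𝔐`.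
In particular it is always a vector subspace. -/
theorem multilinear_image_classification {F : Type*} [Field F] {m : ℕ}
    (p : FreeMagma (Fin m) →₀ F) (hml : IsMultilinear p) :
    Set.range (fun v : Fin m → RPS F => evalPoly p v) = {0} ∨
    (∃ ω : F, ω ^ 2 + ω + 1 = 0 ∧
      Set.range (fun v : Fin m → RPS F => evalPoly p v) =
        (Submodule.span F {mk4 0 1 ω (ω ^ 2)} : Submodule F (RPS F))) ∨
    (∃ ω : F, ω ^ 2 + ω + 1 = 0 ∧
      Set.range (fun v : Fin m → RPS F => evalPoly p v) =
        (Submodule.span F {mk4 0 1 (ω ^ 2) ω} : Submodule F (RPS F))) ∨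
    Set.range (fun v : Fin m → RPS F => evalPoly p v) = {x | tr x = 0 ∧ sc x = 0} ∨
    Set.range (fun v : Fin m → RPS F => evalPoly p v) = Set.univ := by
  classical
  rcases Nat.eq_zero_or_pos m with hm0 | hmpos
  · -- m = 0 : the polynomial is zero
    subst hm0
    left
    have hp0 : p = 0 := by
      ext w
      exact (freeMagma_fin0_false w).elim
    subst hp0
    have he : ∀ v : Fin 0 → RPS F, evalPoly (0 : FreeMagma (Fin 0) →₀ F) v = 0 := by
      intro v; simp [evalPoly]
    ext x
    simp only [Set.mem_range, Set.mem_singleton_iff]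
    constructor
    · rintro ⟨v, rfl⟩; exact he v
    · rintro rfl; exact ⟨fun _ => 1, he _⟩
  · set C : F := ∑ w ∈ p.support, p w with hC
    set i0 : Fin m := ⟨0, hmpos⟩
    by_cases hCz : C = 0
    swap
    · -- nonzero coefficient sum: image is everything
      right; right; right; right
      ext x
      simp only [Set.mem_range, Set.mem_univ, iff_true]
      refine ⟨Function.update (fun _ => (1 : RPS F)) i0 (C⁻¹ • x), ?_⟩
      rw [eval_ones hml i0, ← hC, smul_smul, mul_inv_cancel₀ hCz, one_smul]
    -- C = 0
    have hsc0 : ∀ v : Fin m → RPS F, sc (evalPoly p v) = 0 := by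
      intro v; rw [sc_eval hml, ← hC, hCz, zero_mul]
    have htr0 : ∀ v : Fin m → RPS F, tr (evalPoly p v) = 0 := by
      intro v; rw [tr_eval hml, ← hC, hCz, zero_mul]
    have hS : ∀ v : Fin m → RPS F,
        cS (evalPoly p v) = -cP (evalPoly p v) - cR (evalPoly p v) := by
      intro v
      have h1 := htr0 v
      have h2 := hsc0 v
      simp only [tr] at h1
      linear_combination h1 - h2
    by_cases hz : ∀ v : Fin m → RPS F, evalPoly p v = 0
    · left
      ext x
      simp only [Set.mem_range, Set.mem_singleton_iff]
      constructor
      · rintro ⟨v, rfl⟩; exact hz v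
      · rintro rfl; exact ⟨fun _ => 1, hz _⟩
    push_neg at hz
    obtain ⟨v₀, hv₀⟩ := hz
    by_cases hrk : ∃ (u : Fin m → RPS F) (i : Fin m) (z₁ z₂ : RPS F),
        cP (evalPoly p (Function.update u i z₁)) * cR (evalPoly p (Function.update u i z₂)) ≠
        cP (evalPoly p (Function.update u i z₂)) * cR (evalPoly p (Function.update u i z₁))
    · -- a rank-2 slice: the image is the trace-zero scalar-free plane
      right; right; right; left
      obtain ⟨u, i, z₁, z₂, hdet⟩ := hrk
      set w₁ := evalPoly p (Function.update u i z₁) with hw₁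
      set w₂ := evalPoly p (Function.update u i z₂) with hw₂
      set D : F := cP w₁ * cR w₂ - cP w₂ * cR w₁ with hD
      have hDne : D ≠ 0 := sub_ne_zero.mpr hdet
      ext x
      simp only [Set.mem_range, Set.mem_setOf_eq]
      constructor
      · rintro ⟨v, rfl⟩; exact ⟨htr0 v, hsc0 v⟩
      · rintro ⟨hxtr, hxsc⟩
        have hxS : cS x = -cP x - cR x := by
          simp only [tr] at hxtr
          linear_combination hxtr - hxsc
        set a : F := (cP x * cR w₂ - cR x * cP w₂) / D with ha
        set b : F := (cP w₁ * cR x - cR w₁ * cP x) / D with hb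
        refine ⟨Function.update u i (a • z₁ + b • z₂), ?_⟩
        rw [eval_update_add hml, eval_update_smul hml, eval_update_smul hml, ← hw₁, ← hw₂]
        have hcP : a * cP w₁ + b * cP w₂ = cP x := by
          rw [ha, hb]
          field_simp
          ring
        have hcR : a * cR w₁ + b * cR w₂ = cR x := by
          rw [ha, hb]
          field_simp
          ring
        apply ext4
        · simp only [sc_add, sc_smul]
          rw [hw₁, hw₂, hsc0, hsc0, hxsc]
          ring
        · simpa using hcP
        · simpa using hcR
        · simp only [cS_add, cS_smul]
          rw [hw₁, hw₂, hS, hS, ← hw₁, ← hw₂, hxS]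
          linear_combination -hcP - hcR
    · -- all slices rank ≤ 1 : the image is a line
      push_neg at hrk
      have hprop := prop_lemma (F := F) (V := RPS F) m
        (fun v => cP (evalPoly p v)) (fun v => cR (evalPoly p v))
        (fun v i x y => by
          show cP (evalPoly p (Function.update v i (x + y))) = _
          rw [eval_update_add hml]
          simp)
        (fun v i x y => by
          show cR (evalPoly p (Function.update v i (x + y))) = _
          rw [eval_update_add hml]
          simp)
        (fun v i x y => hrk v i x y)
      have hdep : ∀ v w : Fin m → RPS F,
          cP (evalPoly p v) * cR (evalPoly p w) = cP (evalPoly p w) * cR (evalPoly p v) := by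
        rcases hprop with h0 | ⟨c, hc⟩
        · have h0' : ∀ v : Fin m → RPS F, cP (evalPoly p v) = 0 := h0
          intro v w
          rw [h0' v, h0' w]
          ring
        · have hc' : ∀ v : Fin m → RPS F, cR (evalPoly p v) = c * cP (evalPoly p v) := hc
          intro v w
          rw [hc' v, hc' w]
          ring
      set x₀ : RPS F := evalPoly p v₀ with hx₀
      have hscx₀ : sc x₀ = 0 := hsc0 v₀
      have hSx₀ : cS x₀ = -cP x₀ - cR x₀ := hS v₀
      have hne : ¬(cP x₀ = 0 ∧ cR x₀ = 0) := by
        rintro ⟨h1, h2⟩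
        apply hv₀
        apply ext4
        · rw [hscx₀]; rfl
        · rw [h1]; rfl
        · rw [h2]; rfl
        · rw [hSx₀, h1, h2]; simp
      have hline : ∀ v : Fin m → RPS F, ∃ lam : F, evalPoly p v = lam • x₀ := by
        intro v
        have hd : cP (evalPoly p v) * cR x₀ = cP x₀ * cR (evalPoly p v) := hdep v v₀
        by_cases h1 : cP x₀ = 0
        · have h2 : cR x₀ ≠ 0 := fun h => hne ⟨h1, h⟩
          refine ⟨cR (evalPoly p v) * (cR x₀)⁻¹, ?_⟩
          have hPv : cP (evalPoly p v) = 0 := by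
            have h3 : cP (evalPoly p v) * cR x₀ = 0 := by
              linear_combination hd + cR (evalPoly p v) * h1
            rcases mul_eq_zero.mp h3 with h | h
            · exact h
            · exact absurd h h2
          apply ext4
          · rw [sc_smul, hsc0 v, hscx₀, mul_zero]
          · rw [cP_smul, hPv, h1, mul_zero]
          · rw [cR_smul]
            field_simp
          · rw [cS_smul, hS v, hSx₀, hPv, h1]
            field_simp
            ring
        · refine ⟨cP (evalPoly p v) * (cP x₀)⁻¹, ?_⟩
          apply ext4
          · rw [sc_smul, hsc0 v, hscx₀, mul_zero]
          · rw [cP_smul]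
            field_simp
          · rw [cR_smul]
            field_simp
            linear_combination -hd
          · rw [cS_smul, hS v, hSx₀]
            field_simp
            linear_combination hd
      obtain ⟨lam, hlam⟩ : ∃ lam : F, phi x₀ = lam • x₀ := by
        have h := hline (fun j => phi (v₀ j))
        rwa [eval_phi, ← hx₀] at h
      have hquad : (lam * lam + lam + 1) • x₀ = 0 := by
        have hch := char_identity (htr0 v₀) (hsc0 v₀)
        rw [← hx₀] at hch
        rw [hlam, phi_smul, hlam] at hch
        calc (lam * lam + lam + 1) • x₀ = lam • (lam • x₀) + lam • x₀ + x₀ := by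
              rw [add_smul, add_smul, one_smul, smul_smul]
        _ = 0 := hch
      have homega : lam ^ 2 + lam + 1 = 0 := by
        by_contra hq
        apply hv₀
        have hq' : lam * lam + lam + 1 ≠ 0 := by
          intro h; exact hq (by linear_combination h)
        have h5 := congrArg (fun t => (lam * lam + lam + 1)⁻¹ • t) hquad
        simpa [smul_smul, inv_mul_cancel₀ hq'] using h5
      have hlam0 : lam ≠ 0 := by
        intro h
        rw [h] at homega
        simp at homega
      have e1 : cS x₀ = lam * cP x₀ := by
        have h := congrArg cP hlam
        simpa using h
      have e2 : cP x₀ = lam * cR x₀ := by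
        have h := congrArg cR hlam
        simpa using h
      have hP0 : cP x₀ ≠ 0 := by
        intro h
        refine hne ⟨h, ?_⟩
        rw [h] at e2
        rcases mul_eq_zero.mp e2.symm with h' | h'
        · exact absurd h' hlam0
        · exact h'
      have hcube : lam * lam * lam = 1 := by
        linear_combination (lam - 1) * homega
      have hx0g : x₀ = cP x₀ • (mk4 0 1 (lam ^ 2) lam : RPS F) := by
        apply ext4
        · rw [sc_smul, sc_mk4, mul_zero, hscx₀]
        · rw [cP_smul, cP_mk4, mul_one]
        · rw [cR_smul, cR_mk4]
          linear_combination (-(lam ^ 2)) * e2 + (-(cR x₀)) * hcube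
        · rw [cS_smul, cS_mk4]
          linear_combination e1
      right; right; left
      refine ⟨lam, homega, ?_⟩
      ext t
      simp only [Set.mem_range, SetLike.mem_coe, Submodule.mem_span_singleton]
      constructor
      · rintro ⟨v, rfl⟩
        obtain ⟨d, hd⟩ := hline v
        refine ⟨d * cP x₀, ?_⟩
        rw [hd, mul_smul]
        congr 1
        exact hx0g.symm
      · rintro ⟨d, rfl⟩
        refine ⟨Function.update v₀ i0 ((d * (cP x₀)⁻¹) • v₀ i0), ?_⟩
        rw [eval_update_smul hml, Function.update_eq_self, ← hx₀]
        nth_rewrite 2 [hx0g]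
        rw [smul_smul]
        congr 1
        field_simp
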